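/- arXiv:1409.7854 — 2 statements merged into one kernel-verified Lean document; each statement's English description precedes it below -/
import Mathlib

section
/- For γ > 1 and any fixed ρ̄ > 0, there exists a constant c₁ = c₁(ρ̄, γ) > 0 such that for all ρ ≥ 0, h(ρ) - h(ρ̄) - h'(ρ̄)(ρ - ρ̄) ≥ c₁ ρ (ρ^θ - ρ̄^θ)², where θ = (γ-1)/2 and h(ρ) = κ ρ^γ/(γ-1) with κ > 0. -/
/-- Relative internal energy lower bound: for `h(ρ) = κ ρ^γ/(γ-1)`, `θ = (γ-1)/2`,
`h(ρ) - h(ρ̄) - h'(ρ̄)(ρ - ρ̄) ≥ c₁ ρ (ρ^θ - ρ̄^θ)²`. -/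
theorem stmt0 (γ κ ρb : ℝ) (hγ : 1 < γ) (hκ : 0 < κ) (hρb : 0 < ρb) :
    ∃ c₁ > 0, ∀ ρ : ℝ, 0 ≤ ρ →
      κ * ρ ^ γ / (γ - 1) - κ * ρb ^ γ / (γ - 1)
          - (κ * γ * ρb ^ (γ - 1) / (γ - 1)) * (ρ - ρb)
        ≥ c₁ * ρ * (ρ ^ ((γ - 1) / 2) - ρb ^ ((γ - 1) / 2)) ^ 2 := by
  have hγ1 : (0:ℝ) < γ - 1 := by linarith
  have hγp1 : (0:ℝ) < γ + 1 := by linarith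
  have hc : (0:ℝ) < κ / (γ - 1) := div_pos hκ hγ1
  refine ⟨κ / (γ - 1), hc, fun ρ hρ => ?_⟩
  set θ : ℝ := (γ - 1) / 2 with hθ
  have hBB : ρb ^ θ * ρb ^ θ = ρb ^ (γ - 1) := by
    rw [← Real.rpow_add hρb, hθ]; ring_nf
  have hB2b : ρb ^ (γ - 1) * ρb = ρb ^ γ := by
    nth_rewrite 2 [← Real.rpow_one ρb]
    rw [← Real.rpow_add hρb]; ring_nf
  rcases eq_or_lt_of_le hρ with h0 | hρpos
  · -- ρ = 0
    rw [← h0]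
    have e1 : (0:ℝ) ^ γ = 0 := Real.zero_rpow (by positivity)
    have e2 : (0:ℝ) ^ θ = 0 := Real.zero_rpow (by positivity)
    rw [e1, e2]
    have hb : 0 < ρb ^ γ := Real.rpow_pos_of_pos hρb γ
    have hb1 : 0 < ρb ^ (γ - 1) := Real.rpow_pos_of_pos hρb _
    rw [ge_iff_le]
    have heq : κ * 0 / (γ - 1) - κ * ρb ^ γ / (γ - 1)
        - κ * γ * ρb ^ (γ - 1) / (γ - 1) * (0 - ρb) = κ / (γ - 1) *
          (γ * (ρb ^ (γ - 1) * ρb) - ρb ^ γ) := by ring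
    rw [heq, hB2b]
    have : (0:ℝ) ≤ κ / (γ - 1) * ((γ - 1) * ρb ^ γ) := by positivity
    nlinarith
  · -- ρ > 0
    have hAB : ρ ^ θ * ρ ^ θ = ρ ^ (γ - 1) := by
      rw [← Real.rpow_add hρpos, hθ]; ring_nf
    have hA2ρ : ρ ^ (γ - 1) * ρ = ρ ^ γ := by
      nth_rewrite 2 [← Real.rpow_one ρ]
      rw [← Real.rpow_add hρpos]; ring_nf
    have hAρ : ρ ^ θ * ρ = ρ ^ ((γ + 1) / 2) := by
      nth_rewrite 2 [← Real.rpow_one ρ]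
      rw [← Real.rpow_add hρpos, hθ]; ring_nf
    -- weighted AM-GM
    have hp₁ : (0:ℝ) ≤ ρb ^ θ * ρ ^ ((γ + 1) / 2) := by positivity
    have hp₂ : (0:ℝ) ≤ ρb ^ γ := by positivity
    have hw₁ : (0:ℝ) ≤ 2 / (γ + 1) := by positivity
    have hw₂ : (0:ℝ) ≤ (γ - 1) / (γ + 1) := by positivity
    have hw : 2 / (γ + 1) + (γ - 1) / (γ + 1) = 1 := by field_simp; ring
    have amgm := Real.geom_mean_le_arith_mean2_weighted hw₁ hw₂ hp₁ hp₂ hw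
    have hgm : (ρb ^ θ * ρ ^ ((γ + 1) / 2)) ^ (2 / (γ + 1)) * (ρb ^ γ) ^ ((γ - 1) / (γ + 1))
        = ρb ^ (γ - 1) * ρ := by
      rw [Real.mul_rpow (Real.rpow_pos_of_pos hρb θ).le (by positivity),
        ← Real.rpow_mul hρb.le, ← Real.rpow_mul hρpos.le, ← Real.rpow_mul hρb.le]
      have eθ : θ * (2 / (γ + 1)) = (γ - 1) / (γ + 1) := by
        rw [hθ]; field_simp
      have e1 : (γ + 1) / 2 * (2 / (γ + 1)) = 1 := by field_simp
      have eγ : (γ - 1) / (γ + 1) + γ * ((γ - 1) / (γ + 1)) = γ - 1 := by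
        field_simp; ring
      rw [eθ, e1, Real.rpow_one]
      calc ρb ^ ((γ - 1) / (γ + 1)) * ρ * ρb ^ (γ * ((γ - 1) / (γ + 1)))
          = ρb ^ ((γ - 1) / (γ + 1)) * ρb ^ (γ * ((γ - 1) / (γ + 1))) * ρ := by ring
        _ = ρb ^ ((γ - 1) / (γ + 1) + γ * ((γ - 1) / (γ + 1))) * ρ := by
            rw [← Real.rpow_add hρb]
        _ = ρb ^ (γ - 1) * ρ := by rw [eγ]
    rw [hgm] at amgm
    have key : (γ + 1) * (ρb ^ (γ - 1) * ρ)
        ≤ 2 * (ρb ^ θ * ρ ^ ((γ + 1) / 2)) + (γ - 1) * ρb ^ γ := by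
      have h := mul_le_mul_of_nonneg_left amgm hγp1.le
      have h2 : (γ + 1) * (2 / (γ + 1) * (ρb ^ θ * ρ ^ ((γ + 1) / 2))
          + (γ - 1) / (γ + 1) * ρb ^ γ)
          = 2 * (ρb ^ θ * ρ ^ ((γ + 1) / 2)) + (γ - 1) * ρb ^ γ := by
        field_simp
      linarith
    rw [← hAρ, ← hBB, ← hB2b, ← hBB] at key
    have main : ρ * (ρ ^ θ - ρb ^ θ) ^ 2
        ≤ ρ ^ θ * ρ ^ θ * ρ - ρb ^ θ * ρb ^ θ * ρb
          - γ * (ρb ^ θ * ρb ^ θ) * (ρ - ρb) := by nlinarith [key]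
    have eρ : ρ ^ γ = ρ ^ θ * ρ ^ θ * ρ := by rw [hAB, hA2ρ]
    have eb : ρb ^ γ = ρb ^ θ * ρb ^ θ * ρb := by rw [hBB, hB2b]
    have eb1 : ρb ^ (γ - 1) = ρb ^ θ * ρb ^ θ := hBB.symm
    calc κ * ρ ^ γ / (γ - 1) - κ * ρb ^ γ / (γ - 1)
          - (κ * γ * ρb ^ (γ - 1) / (γ - 1)) * (ρ - ρb)
        = (κ / (γ - 1)) * (ρ ^ θ * ρ ^ θ * ρ - ρb ^ θ * ρb ^ θ * ρb
            - γ * (ρb ^ θ * ρb ^ θ) * (ρ - ρb)) := by rw [eρ, eb, eb1]; ring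
      _ ≥ (κ / (γ - 1)) * (ρ * (ρ ^ θ - ρb ^ θ) ^ 2) :=
          mul_le_mul_of_nonneg_left main hc.le
      _ = κ / (γ - 1) * ρ * (ρ ^ θ - ρb ^ θ) ^ 2 := by ring
end

section
/- For γ > 1, κ = (γ-1)²/(4γ), θ = (γ-1)/2, the Riemann invariant w(ρ, m) = m/ρ + ρ^θ/θ · θ = m/ρ + ρ^θ, considered as a function of (ρ, m) on {ρ > 0}, is quasi-convex in the sense that ∇^⊥w · ∇²w · (∇^⊥w)^T ≥ 0, where ∇^⊥ = (∂_m, −∂_ρ); similarly z(ρ, m) = m/ρ − ρ^θ satisfies −∇^⊥z · ∇²z · (∇^⊥z)^T ≥ 0. -/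
/-- `∂²_{ρρ}` of a function of two variables. -/
noncomputable def hess11 (f : ℝ → ℝ → ℝ) (ρ m : ℝ) : ℝ :=
  deriv (fun r : ℝ => deriv (fun r' : ℝ => f r' m) r) ρ

/-- `∂²_{ρm}` of a function of two variables. -/
noncomputable def hess12 (f : ℝ → ℝ → ℝ) (ρ m : ℝ) : ℝ :=
  deriv (fun r : ℝ => deriv (fun mm : ℝ => f r mm) m) ρ

/-- `∂²_{mm}` of a function of two variables. -/
noncomputable def hess22 (f : ℝ → ℝ → ℝ) (ρ m : ℝ) : ℝ :=
  deriv (fun mm : ℝ => deriv (fun mm' : ℝ => f ρ mm') mm) m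

/-- Hessian quadratic form `v ∇²f vᵀ`. -/
noncomputable def hessQuad (f : ℝ → ℝ → ℝ) (ρ m v₁ v₂ : ℝ) : ℝ :=
  v₁ ^ 2 * hess11 f ρ m + 2 * v₁ * v₂ * hess12 f ρ m + v₂ ^ 2 * hess22 f ρ m

open Real Filter

lemma hd1' (m ε t : ℝ) (s : ℝ) (hs : s ≠ 0) :
    HasDerivAt (fun r : ℝ => m / r + ε * r ^ t)
      (-(m / s ^ 2) + ε * (t * s ^ (t - 1))) s := by
  have h1 : HasDerivAt (fun r : ℝ => m / r) (-(m / s ^ 2)) s := by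
    have h := (hasDerivAt_inv hs).const_mul m
    simpa [div_eq_mul_inv, mul_neg] using h
  have h2 : HasDerivAt (fun r : ℝ => ε * r ^ t) (ε * (t * s ^ (t - 1))) s :=
    (Real.hasDerivAt_rpow_const (Or.inl hs)).const_mul ε
  exact h1.add h2

lemma quadEq (t : ℝ) (ht : 0 < t) (ρ m ε : ℝ) (hρ : 0 < ρ) :
    hessQuad (fun r mm => mm / r + ε * r ^ t) ρ m
      (deriv (fun mm : ℝ => mm / ρ + ε * ρ ^ t) m)
      (-(deriv (fun r : ℝ => m / r + ε * r ^ t) ρ))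
      = ε * (t * (t + 1) * ρ ^ t / ρ ^ 4) := by
  have hρ' : ρ ≠ 0 := hρ.ne'
  have hv1 : deriv (fun mm : ℝ => mm / ρ + ε * ρ ^ t) m = 1 / ρ := by
    have h : HasDerivAt (fun mm : ℝ => mm / ρ + ε * ρ ^ t) (1 / ρ) m := by
      simpa using ((hasDerivAt_id m).div_const ρ).add_const (ε * ρ ^ t)
    exact h.deriv
  have hv2 : deriv (fun r : ℝ => m / r + ε * r ^ t) ρ
      = -(m / ρ ^ 2) + ε * (t * ρ ^ (t - 1)) := (hd1' m ε t ρ hρ').deriv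
  have h22 : hess22 (fun r mm => mm / r + ε * r ^ t) ρ m = 0 := by
    unfold hess22
    have hfun : (fun mm : ℝ => deriv (fun mm' : ℝ => mm' / ρ + ε * ρ ^ t) mm)
        = fun _ => 1 / ρ := by
      funext mm
      have h : HasDerivAt (fun mm' : ℝ => mm' / ρ + ε * ρ ^ t) (1 / ρ) mm := by
        simpa using ((hasDerivAt_id mm).div_const ρ).add_const (ε * ρ ^ t)
      exact h.deriv
    rw [hfun]; simp
  have h12 : hess12 (fun r mm => mm / r + ε * r ^ t) ρ m = -(ρ ^ 2)⁻¹ := by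
    unfold hess12
    have hfun : (fun r : ℝ => deriv (fun mm : ℝ => mm / r + ε * r ^ t) m)
        = fun r => r⁻¹ := by
      funext r
      have h : HasDerivAt (fun mm : ℝ => mm / r + ε * r ^ t) (1 / r) m := by
        simpa using ((hasDerivAt_id m).div_const r).add_const (ε * r ^ t)
      simpa [one_div] using h.deriv
    rw [hfun, deriv_inv]
  have h11 : hess11 (fun r mm => mm / r + ε * r ^ t) ρ m
      = 2 * m / ρ ^ 3 + ε * (t * (t - 1) * ρ ^ (t - 2)) := by
    unfold hess11
    have hev : (fun r : ℝ => deriv (fun r' : ℝ => m / r' + ε * r' ^ t) r)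
        =ᶠ[nhds ρ] fun r => -(m / r ^ 2) + ε * (t * r ^ (t - 1)) := by
      filter_upwards [eventually_ne_nhds hρ'] with r hr
      exact (hd1' m ε t r hr).deriv
    rw [hev.deriv_eq]
    have hA : HasDerivAt (fun r : ℝ => -(m / r ^ 2)) (2 * m / ρ ^ 3) ρ := by
      have h := ((hasDerivAt_pow 2 ρ).inv (pow_ne_zero 2 hρ')).const_mul (-m)
      have hfun : (fun r : ℝ => -m * (r ^ 2)⁻¹) = fun r : ℝ => -(m / r ^ 2) := by
        funext r; field_simp
      change HasDerivAt (fun r : ℝ => -m * (r ^ 2)⁻¹) _ ρ at h; rw [hfun] at h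
      convert h using 1
      field_simp
      ring
    have hB : HasDerivAt (fun r : ℝ => ε * (t * r ^ (t - 1)))
        (ε * (t * ((t - 1) * ρ ^ (t - 1 - 1)))) ρ :=
      ((Real.hasDerivAt_rpow_const (Or.inl hρ')).const_mul t).const_mul ε
    have hsub : t - 1 - 1 = t - 2 := by ring
    rw [hsub] at hB
    rw [HasDerivAt.deriv (f := fun r => -(m / r ^ 2) + ε * (t * r ^ (t - 1))) (hA.add hB)]
    ring
  unfold hessQuad
  rw [h11, h12, h22, hv1, hv2]
  have e1 : ρ ^ (t - 1) = ρ ^ t / ρ := by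
    rw [Real.rpow_sub hρ, Real.rpow_one]
  have e2 : ρ ^ (t - 2) = ρ ^ t / ρ ^ 2 := by
    rw [Real.rpow_sub hρ, Real.rpow_two]
  rw [e1, e2]
  field_simp
  ring

/-- Quasi-convexity of the Riemann invariants `w = m/ρ + ρ^θ`, `z = m/ρ - ρ^θ`:
`∇^⊥w ∇²w (∇^⊥w)ᵀ ≥ 0` and `-∇^⊥z ∇²z (∇^⊥z)ᵀ ≥ 0`, where `∇^⊥ = (∂_m, -∂_ρ)`. -/
theorem stmt7 (γ : ℝ) (hγ : 1 < γ) (ρ m : ℝ) (hρ : 0 < ρ) :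
    (0 ≤ hessQuad (fun r mm => mm / r + r ^ ((γ - 1) / 2)) ρ m
        (deriv (fun mm : ℝ => mm / ρ + ρ ^ ((γ - 1) / 2)) m)
        (-(deriv (fun r : ℝ => m / r + r ^ ((γ - 1) / 2)) ρ)))
    ∧ (0 ≤ -(hessQuad (fun r mm => mm / r - r ^ ((γ - 1) / 2)) ρ m
        (deriv (fun mm : ℝ => mm / ρ - ρ ^ ((γ - 1) / 2)) m)
        (-(deriv (fun r : ℝ => m / r - r ^ ((γ - 1) / 2)) ρ)))) := by
  set t : ℝ := (γ - 1) / 2 with ht_def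
  have ht : 0 < t := by rw [ht_def]; linarith
  constructor
  · have hw := quadEq t ht ρ m 1 hρ
    simp only [one_mul] at hw
    rw [hw]
    positivity
  · have hz := quadEq t ht ρ m (-1) hρ
    simp only [neg_one_mul, ← sub_eq_add_neg] at hz
    rw [hz, neg_neg]
    positivity
end
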